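/- In ℝ^10 with coordinates indexed by 2-element subsets of {1,…,5}, define v(I)_{jk} = 1 if |I ∩ {j,k}| = 1 and 0 otherwise, and d_a = v({a}), and let L be the span of d_1,…,d_5. Then the set of four vectors {v({1,2}), v({1,3}), v({1,4}), v({1,5})} is minimally dependent modulo L: a nontrivial combination (namely their sum) lies in L, but no nontrivial combination of any three of them lies in L. -/

import Mathlib

/-- Index type: 2-element subsets of {1,…,n} (modeled as `Fin n`, 0-based). -/
def Pair (n : ℕ) := {s : Finset (Fin n) // s.card = 2}

noncomputable instance (n : ℕ) : Fintype (Pair n) := by unfold Pair; infer_instance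

/-- The vector v(I): coordinate at the pair {j,k} is 1 iff |I ∩ {j,k}| = 1. -/
def v (n : ℕ) (I : Finset (Fin n)) : Pair n → ℝ :=
  fun s => if (I ∩ s.val).card = 1 then 1 else 0

/-- d_a = v({a}). -/
def d (n : ℕ) (a : Fin n) : Pair n → ℝ := v n {a}

/-- The four rays of ψ₁^♮ in M_{0,5} (ends modeled 0-based):
w 0 = v({1,2}), w 1 = v({1,3}), w 2 = v({1,4}), w 3 = v({1,5}). -/
def w : Fin 4 → (Pair 5 → ℝ) := ![v 5 {0, 1}, v 5 {0, 2}, v 5 {0, 3}, v 5 {0, 4}]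

/-- Helper: concrete elements of `Pair 5`. -/
def P (a b : Fin 5) (h : ({a,b} : Finset (Fin 5)).card = 2 := by decide) : Pair 5 := ⟨{a,b}, h⟩

set_option maxHeartbeats 4000000 in
/-- {v({1,2}), v({1,3}), v({1,4}), v({1,5})} is minimally dependent modulo
L = span(d₁,…,d₅): their sum lies in L, and no nontrivial combination of a proper
subset lies in L. -/
theorem psi_natural_minimally_dependent :
    (∑ i, w i ∈ Submodule.span ℝ (Set.range (d 5))) ∧
    ∀ S : Finset (Fin 4), S ≠ Finset.univ →
      ∀ c : Fin 4 → ℝ, (∀ i ∉ S, c i = 0) →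
        ∑ i, c i • w i ∈ Submodule.span ℝ (Set.range (d 5)) → c = 0 := by
  constructor
  · rw [Submodule.mem_span_range_iff_exists_fun ℝ]
    refine ⟨![2,1,1,1,1], ?_⟩
    funext s
    simp only [Finset.sum_apply, Pi.smul_apply, smul_eq_mul]
    obtain ⟨fs, hfs⟩ := s
    rw [Finset.card_eq_two] at hfs
    obtain ⟨a, b, hab, rfl⟩ := hfs
    fin_cases a <;> fin_cases b <;>
      simp (config := {decide := true}) only [Fin.sum_univ_five, Fin.sum_univ_four, d, w, v,
        Matrix.cons_val, Matrix.cons_val_zero, Matrix.cons_val_one, if_true, if_false] at hab ⊢ <;> norm_num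
  · intro S hS c hc hmem
    obtain ⟨i0, hi0⟩ : ∃ i, i ∉ S := by
      by_contra h
      push_neg at h
      exact hS (Finset.eq_univ_iff_forall.mpr h)
    have hc0 := hc i0 hi0
    rw [Submodule.mem_span_range_iff_exists_fun ℝ] at hmem
    obtain ⟨t, ht⟩ := hmem
    have E : ∀ s : Pair 5, (∑ a, t a • d 5 a) s = (∑ i, c i • w i) s := fun s => congrFun ht s
    have e01 := E (P 0 1); have e02 := E (P 0 2); have e03 := E (P 0 3); have e04 := E (P 0 4)
    have e12 := E (P 1 2); have e13 := E (P 1 3); have e14 := E (P 1 4)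
    have e23 := E (P 2 3); have e24 := E (P 2 4); have e34 := E (P 3 4)
    simp only [Finset.sum_apply, Pi.smul_apply, smul_eq_mul] at e01 e02 e03 e04 e12 e13 e14 e23 e24 e34
    simp [Finset.sum_apply, Fin.sum_univ_five, Fin.sum_univ_four, d, v, w, P,
      Matrix.vecHead, Matrix.vecTail] at e01
    simp [Finset.sum_apply, Fin.sum_univ_five, Fin.sum_univ_four, d, v, w, P,
      Matrix.vecHead, Matrix.vecTail] at e02
    simp [Finset.sum_apply, Fin.sum_univ_five, Fin.sum_univ_four, d, v, w, P,
      Matrix.vecHead, Matrix.vecTail] at e03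
    simp [Finset.sum_apply, Fin.sum_univ_five, Fin.sum_univ_four, d, v, w, P,
      Matrix.vecHead, Matrix.vecTail] at e04
    simp [Finset.sum_apply, Fin.sum_univ_five, Fin.sum_univ_four, d, v, w, P,
      Matrix.vecHead, Matrix.vecTail] at e12
    simp [Finset.sum_apply, Fin.sum_univ_five, Fin.sum_univ_four, d, v, w, P,
      Matrix.vecHead, Matrix.vecTail] at e13
    simp [Finset.sum_apply, Fin.sum_univ_five, Fin.sum_univ_four, d, v, w, P,
      Matrix.vecHead, Matrix.vecTail] at e14
    simp [Finset.sum_apply, Fin.sum_univ_five, Fin.sum_univ_four, d, v, w, P,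
      Matrix.vecHead, Matrix.vecTail] at e23
    simp [Finset.sum_apply, Fin.sum_univ_five, Fin.sum_univ_four, d, v, w, P,
      Matrix.vecHead, Matrix.vecTail] at e24
    simp [Finset.sum_apply, Fin.sum_univ_five, Fin.sum_univ_four, d, v, w, P,
      Matrix.vecHead, Matrix.vecTail] at e34
    funext i
    fin_cases i0 <;> fin_cases i <;> simp_all <;> linarith
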